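/- Define V(k,d) = sup over finite sets X with |X| = d and p ∈ Δ(X) of V(k,p), where V(k,p) is the maximal expected total l1 variation of a k-step Δ(X)-valued martingale starting at p. Then V(k_1, d_1) + V(k_2, d_2) ≤ V(k_1 + k_2, d_1 d_2). -/

import Mathlib

open MeasureTheory Real


lemma condexp_prod_factor {Ω₁ Ω₂ : Type} {m₁ : MeasurableSpace Ω₁} {m₂ : MeasurableSpace Ω₂}
    (μ₁ : Measure Ω₁) (μ₂ : Measure Ω₂) [IsProbabilityMeasure μ₁] [IsProbabilityMeasure μ₂]
    {u : Ω₁ → ℝ} {v : Ω₂ → ℝ} (hu : StronglyMeasurable u) (hv : StronglyMeasurable v)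
    (hub : ∀ x, |u x| ≤ 1) (hvb : ∀ y, |v y| ≤ 1)
    (ℱ₁ : Filtration ℕ m₁) (ℱ₂ : Filtration ℕ m₂) (i j : ℕ) :
    (fun ω : Ω₁ × Ω₂ => ((μ₁[u|ℱ₁ i]) ω.1) * ((μ₂[v|ℱ₂ j]) ω.2))
      =ᵐ[μ₁.prod μ₂]
      (μ₁.prod μ₂)[(fun ω => u ω.1 * v ω.2) | (ℱ₁ i).prod (ℱ₂ j)] := by
  have hm₁ : ℱ₁ i ≤ m₁ := ℱ₁.le i
  have hm₂ : ℱ₂ j ≤ m₂ := ℱ₂.le j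
  have hm' : (ℱ₁ i).prod (ℱ₂ j) ≤ m₁.prod m₂ :=
    sup_le (le_trans (MeasurableSpace.comap_mono hm₁) le_sup_left)
      (le_trans (MeasurableSpace.comap_mono hm₂) le_sup_right)
  have hu_int : Integrable u μ₁ :=
    Integrable.mono' (integrable_const 1) hu.aestronglyMeasurable
      (Filter.Eventually.of_forall fun x => by simpa using hub x)
  have hv_int : Integrable v μ₂ :=
    Integrable.mono' (integrable_const 1) hv.aestronglyMeasurable
      (Filter.Eventually.of_forall fun y => by simpa using hvb y)
  have hF_int : Integrable (fun ω : Ω₁ × Ω₂ => u ω.1 * v ω.2) (μ₁.prod μ₂) :=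
    hu_int.mul_prod hv_int
  have hG_int : Integrable (fun ω : Ω₁ × Ω₂ => ((μ₁[u|ℱ₁ i]) ω.1) * ((μ₂[v|ℱ₂ j]) ω.2))
      (μ₁.prod μ₂) := integrable_condExp.mul_prod integrable_condExp
  have hsf : SigmaFinite ((μ₁.prod μ₂).trim hm') := by
    have : IsFiniteMeasure ((μ₁.prod μ₂).trim hm') := isFiniteMeasure_trim hm'
    infer_instance
  refine ae_eq_condExp_of_forall_setIntegral_eq hm' hF_int
    (fun s _ _ => hG_int.integrableOn) ?_ ?_
  · -- set integral equality
    have key : ∀ s : Set (Ω₁ × Ω₂), MeasurableSet[(ℱ₁ i).prod (ℱ₂ j)] s →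
        ∫ ω in s, ((μ₁[u|ℱ₁ i]) ω.1) * ((μ₂[v|ℱ₂ j]) ω.2) ∂(μ₁.prod μ₂)
          = ∫ ω in s, u ω.1 * v ω.2 ∂(μ₁.prod μ₂) := by
      refine @MeasurableSpace.induction_on_inter (Ω₁ × Ω₂) ((ℱ₁ i).prod (ℱ₂ j)) _ _
        (@generateFrom_prod _ _ (ℱ₁ i) (ℱ₂ j)).symm (@isPiSystem_prod _ _ (ℱ₁ i) (ℱ₂ j)) ?_ ?_ ?_ ?_
      · simp
      · rintro _ ⟨s₁, hs₁, s₂, hs₂, rfl⟩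
        rw [setIntegral_prod_mul, setIntegral_prod_mul,
          setIntegral_condExp hm₁ hu_int hs₁, setIntegral_condExp hm₂ hv_int hs₂]
      · intro t ht h
        have ht' : MeasurableSet t := hm' _ ht
        have e1 := integral_add_compl ht' hG_int
        have e2 := integral_add_compl ht' hF_int
        have etot : ∫ ω, ((μ₁[u|ℱ₁ i]) ω.1) * ((μ₂[v|ℱ₂ j]) ω.2) ∂(μ₁.prod μ₂)
            = ∫ ω, u ω.1 * v ω.2 ∂(μ₁.prod μ₂) := by
          rw [integral_prod_mul, integral_prod_mul, integral_condExp hm₁, integral_condExp hm₂]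
        linarith
      · intro s hd hmeas h
        have hs' : ∀ n, MeasurableSet (s n) := fun n => hm' _ (hmeas n)
        rw [integral_iUnion hs' hd hG_int.integrableOn,
          integral_iUnion hs' hd hF_int.integrableOn]
        exact tsum_congr h
    exact fun s hs _ => key s hs
  · refine ⟨fun ω => ((μ₁[u|ℱ₁ i]) ω.1) * ((μ₂[v|ℱ₂ j]) ω.2), ?_, Filter.EventuallyEq.rfl⟩
    exact (stronglyMeasurable_condExp.comp_measurable (@measurable_fst _ _ (ℱ₁ i) (ℱ₂ j))).mul
      (stronglyMeasurable_condExp.comp_measurable (@measurable_snd _ _ (ℱ₁ i) (ℱ₂ j)))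

-- helper: integral of a function of the first coordinate over a product measure
lemma integral_comp_fst' {Ω₁ Ω₂ : Type} {m₁ : MeasurableSpace Ω₁} {m₂ : MeasurableSpace Ω₂}
    (μ₁ : Measure Ω₁) (μ₂ : Measure Ω₂) [IsProbabilityMeasure μ₁] [IsProbabilityMeasure μ₂]
    {F : Ω₁ → ℝ} (hF : AEStronglyMeasurable F μ₁) :
    ∫ ω : Ω₁ × Ω₂, F ω.1 ∂(μ₁.prod μ₂) = ∫ ω₁, F ω₁ ∂μ₁ := by
  have hmap : Measure.map Prod.fst (μ₁.prod μ₂) = μ₁ := by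
    rw [Measure.map_fst_prod]; simp
  calc ∫ ω : Ω₁ × Ω₂, F ω.1 ∂(μ₁.prod μ₂)
      = ∫ y, F y ∂(Measure.map Prod.fst (μ₁.prod μ₂)) :=
        (integral_map measurable_fst.aemeasurable (by rwa [hmap])).symm
    _ = ∫ ω₁, F ω₁ ∂μ₁ := by rw [hmap]

lemma integral_comp_snd' {Ω₁ Ω₂ : Type} {m₁ : MeasurableSpace Ω₁} {m₂ : MeasurableSpace Ω₂}
    (μ₁ : Measure Ω₁) (μ₂ : Measure Ω₂) [IsProbabilityMeasure μ₁] [IsProbabilityMeasure μ₂]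
    {F : Ω₂ → ℝ} (hF : AEStronglyMeasurable F μ₂) :
    ∫ ω : Ω₁ × Ω₂, F ω.2 ∂(μ₁.prod μ₂) = ∫ ω₂, F ω₂ ∂μ₂ := by
  have hmap : Measure.map Prod.snd (μ₁.prod μ₂) = μ₂ := by
    rw [Measure.map_snd_prod]; simp
  calc ∫ ω : Ω₁ × Ω₂, F ω.2 ∂(μ₁.prod μ₂)
      = ∫ y, F y ∂(Measure.map Prod.snd (μ₁.prod μ₂)) :=
        (integral_map measurable_snd.aemeasurable (by rwa [hmap])).symm
    _ = ∫ ω₂, F ω₂ ∂μ₂ := by rw [hmap]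

lemma qmp_fst' {Ω₁ Ω₂ : Type} {m₁ : MeasurableSpace Ω₁} {m₂ : MeasurableSpace Ω₂}
    (μ₁ : Measure Ω₁) (μ₂ : Measure Ω₂) [IsProbabilityMeasure μ₁] [IsProbabilityMeasure μ₂] :
    Measure.QuasiMeasurePreserving (Prod.fst : Ω₁ × Ω₂ → Ω₁) (μ₁.prod μ₂) μ₁ := by
  refine ⟨measurable_fst, ?_⟩
  rw [Measure.map_fst_prod, measure_univ, one_smul]

lemma qmp_snd' {Ω₁ Ω₂ : Type} {m₁ : MeasurableSpace Ω₁} {m₂ : MeasurableSpace Ω₂}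
    (μ₁ : Measure Ω₁) (μ₂ : Measure Ω₂) [IsProbabilityMeasure μ₁] [IsProbabilityMeasure μ₂] :
    Measure.QuasiMeasurePreserving (Prod.snd : Ω₁ × Ω₂ → Ω₂) (μ₁.prod μ₂) μ₂ := by
  refine ⟨measurable_snd, ?_⟩
  rw [Measure.map_snd_prod, measure_univ, one_smul]

def MSet (k : ℕ) (X : Type) [Fintype X] (p : X → ℝ) : Set ℝ :=
  { v | ∃ (Ω : Type) (m : MeasurableSpace Ω) (μ : Measure Ω)
    (_ : IsProbabilityMeasure μ) (ℱ : Filtration ℕ m) (f : ℕ → Ω → X → ℝ),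
    (∀ t ω x, 0 ≤ f t ω x) ∧ (∀ t ω, ∑ x, f t ω x = 1) ∧ (∀ ω, f 0 ω = p) ∧
    (∀ x, Martingale (fun t ω => f t ω x) ℱ μ) ∧
    v = ∑ t ∈ Finset.Icc 1 k, ∫ ω, ∑ x, |f t ω x - f (t - 1) ω x| ∂μ }

lemma zero_mem_MSet (k : ℕ) (X : Type) [Fintype X] (p : X → ℝ)
    (hp0 : ∀ x, 0 ≤ p x) (hp1 : ∑ x, p x = 1) : (0 : ℝ) ∈ MSet k X p := by
  refine ⟨Unit, ⊤, @Measure.dirac Unit ⊤ (), by infer_instance,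
    ⟨fun _ => ⊤, monotone_const, fun _ => le_rfl⟩, fun _ _ => p,
    fun _ _ x => hp0 x, fun _ _ => hp1, fun _ => rfl, fun x => martingale_const _ _ _, by simp⟩

lemma MSet_le (k : ℕ) (X : Type) [Fintype X] (p : X → ℝ) {v : ℝ}
    (hv : v ∈ MSet k X p) : v ≤ 2 * k := by
  obtain ⟨Ω, m, μ, hμ, ℱ, f, h0, h1, hi, hm, rfl⟩ := hv
  have hterm : ∀ t, ∫ ω, ∑ x, |f t ω x - f (t - 1) ω x| ∂μ ≤ 2 := by
    intro t
    have hint : Integrable (fun ω => ∑ x, |f t ω x - f (t - 1) ω x|) μ :=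
      integrable_finset_sum _ fun x _ =>
        (((hm x).integrable t).sub ((hm x).integrable (t - 1))).abs
    calc ∫ ω, ∑ x, |f t ω x - f (t - 1) ω x| ∂μ ≤ ∫ _ω, (2 : ℝ) ∂μ := by
          refine integral_mono hint (integrable_const 2) fun ω => ?_
          calc ∑ x, |f t ω x - f (t - 1) ω x| ≤ ∑ x, (|f t ω x| + |f (t-1) ω x|) :=
                Finset.sum_le_sum fun x _ => abs_sub _ _
            _ = ∑ x, f t ω x + ∑ x, f (t-1) ω x := by
                rw [Finset.sum_add_distrib]
                congr 1 <;> exact Finset.sum_congr rfl fun x _ => abs_of_nonneg (h0 _ _ _)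
            _ = 2 := by rw [h1, h1]; norm_num
      _ = 2 := by simp
  calc ∑ t ∈ Finset.Icc 1 k, ∫ ω, ∑ x, |f t ω x - f (t - 1) ω x| ∂μ
      ≤ ∑ _t ∈ Finset.Icc 1 k, (2:ℝ) := Finset.sum_le_sum fun t _ => hterm t
    _ ≤ 2 * k := by
        rw [Finset.sum_const, Nat.card_Icc]
        simp only [nsmul_eq_mul]
        have : ((k + 1 - 1 : ℕ) : ℝ) ≤ (k : ℝ) := by norm_num
        nlinarith [this]

lemma MSet_bddAbove (k : ℕ) (X : Type) [Fintype X] (p : X → ℝ) :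
    BddAbove (MSet k X p) := ⟨2 * k, fun _ hv => MSet_le k X p hv⟩

lemma prod_mem_MSet {X₁ X₂ : Type} [Fintype X₁] [Fintype X₂] {p : X₁ → ℝ} {q : X₂ → ℝ}
    {k₁ k₂ : ℕ} {a b : ℝ} (ha : a ∈ MSet k₁ X₁ p) (hb : b ∈ MSet k₂ X₂ q) :
    a + b ∈ MSet (k₁ + k₂) (X₁ × X₂) (fun xy => p xy.1 * q xy.2) := by
  obtain ⟨Ω₁, m₁, μ₁, hμ₁, ℱ₁, f, hf0, hf1, hfi, hfm, rfl⟩ := ha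
  obtain ⟨Ω₂, m₂, μ₂, hμ₂, ℱ₂, g, hg0, hg1, hgi, hgm, rfl⟩ := hb
  -- basic measurability and bounds
  have smf : ∀ t x, StronglyMeasurable (fun ω₁ => f t ω₁ x) :=
    fun t x => ((hfm x).stronglyAdapted t).mono (ℱ₁.le t)
  have smg : ∀ t y, StronglyMeasurable (fun ω₂ => g t ω₂ y) :=
    fun t y => ((hgm y).stronglyAdapted t).mono (ℱ₂.le t)
  have hfb : ∀ t ω x, |f t ω x| ≤ 1 := fun t ω x => by
    rw [abs_of_nonneg (hf0 t ω x), ← hf1 t ω]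
    exact Finset.single_le_sum (fun i _ => hf0 t ω i) (Finset.mem_univ x)
  have hgb : ∀ t ω y, |g t ω y| ≤ 1 := fun t ω y => by
    rw [abs_of_nonneg (hg0 t ω y), ← hg1 t ω]
    exact Finset.single_le_sum (fun i _ => hg0 t ω i) (Finset.mem_univ y)
  -- the product process
  set h : ℕ → Ω₁ × Ω₂ → X₁ × X₂ → ℝ :=
    fun t ω xy => f (min t k₁) ω.1 xy.1 * g (t - k₁) ω.2 xy.2 with hh
  -- the filtration
  set G : Filtration ℕ (@Prod.instMeasurableSpace Ω₁ Ω₂ m₁ m₂) :=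
    ⟨fun t => (ℱ₁ (min t k₁)).prod (ℱ₂ (t - k₁)),
     fun s t hst => sup_le_sup
        (MeasurableSpace.comap_mono (ℱ₁.mono (min_le_min hst le_rfl)))
        (MeasurableSpace.comap_mono (ℱ₂.mono (Nat.sub_le_sub_right hst k₁))),
     fun t => sup_le
        (le_trans (MeasurableSpace.comap_mono (ℱ₁.le _)) le_sup_left)
        (le_trans (MeasurableSpace.comap_mono (ℱ₂.le _)) le_sup_right)⟩ with hG
  have hGs : ∀ t, G t = (ℱ₁ (min t k₁)).prod (ℱ₂ (t - k₁)) := fun _ => rfl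
  have hqf := qmp_fst' μ₁ μ₂
  have hqs := qmp_snd' μ₁ μ₂
  -- martingale property of the product process
  have hmart : ∀ xy : X₁ × X₂,
      Martingale (fun t ω => h t ω xy) G (μ₁.prod μ₂) := by
    intro xy
    refine martingale_nat ?_ ?_ ?_
    · intro t
      exact (((hfm xy.1).stronglyAdapted (min t k₁)).comp_measurable
          (@measurable_fst _ _ (ℱ₁ (min t k₁)) (ℱ₂ (t - k₁)))).mul
        (((hgm xy.2).stronglyAdapted (t - k₁)).comp_measurable
          (@measurable_snd _ _ (ℱ₁ (min t k₁)) (ℱ₂ (t - k₁))))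
    · intro t
      exact ((hfm xy.1).integrable (min t k₁)).mul_prod ((hgm xy.2).integrable (t - k₁))
    · intro t
      rcases lt_or_ge t k₁ with hlt | hle
      · -- phase 1 step
        have e1 : min t k₁ = t := min_eq_left hlt.le
        have e2 : min (t + 1) k₁ = t + 1 := min_eq_left hlt
        have e3 : t - k₁ = 0 := by omega
        have e4 : t + 1 - k₁ = 0 := by omega
        simp only [hh, hGs, e1, e2, e3, e4]
        have key := condexp_prod_factor μ₁ μ₂ (smf (t+1) xy.1) (smg 0 xy.2)
          (fun ω₁ => hfb (t+1) ω₁ xy.1) (fun ω₂ => hgb 0 ω₂ xy.2) ℱ₁ ℱ₂ t 0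
        refine Filter.EventuallyEq.trans ?_ key
        have E₁ := hqf.ae_eq ((hfm xy.1).condExp_ae_eq (Nat.le_succ t))
        have E₂ : (μ₂[(fun ω₂ => g 0 ω₂ xy.2)|ℱ₂ 0]) = fun ω₂ => g 0 ω₂ xy.2 :=
          condExp_of_stronglyMeasurable (ℱ₂.le 0) ((hgm xy.2).stronglyAdapted 0)
            ((hgm xy.2).integrable 0)
        filter_upwards [E₁] with ω hω
        have hω' : (μ₁[(fun ω₁ => f (t+1) ω₁ xy.1)|ℱ₁ t]) ω.1 = f t ω.1 xy.1 := hω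
        rw [← hω', ← congrFun E₂ ω.2]
      · -- phase 2 step
        have e1 : min t k₁ = k₁ := min_eq_right hle
        have e2 : min (t + 1) k₁ = k₁ := min_eq_right (by omega)
        have e4 : t + 1 - k₁ = (t - k₁) + 1 := by omega
        simp only [hh, hGs, e1, e2, e4]
        have key := condexp_prod_factor μ₁ μ₂ (smf k₁ xy.1) (smg ((t - k₁) + 1) xy.2)
          (fun ω₁ => hfb k₁ ω₁ xy.1) (fun ω₂ => hgb ((t - k₁) + 1) ω₂ xy.2) ℱ₁ ℱ₂ k₁ (t - k₁)
        refine Filter.EventuallyEq.trans ?_ key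
        have E₂ := hqs.ae_eq ((hgm xy.2).condExp_ae_eq (Nat.le_succ (t - k₁)))
        have E₁ : (μ₁[(fun ω₁ => f k₁ ω₁ xy.1)|ℱ₁ k₁]) = fun ω₁ => f k₁ ω₁ xy.1 :=
          condExp_of_stronglyMeasurable (ℱ₁.le k₁) ((hfm xy.1).stronglyAdapted k₁)
            ((hfm xy.1).integrable k₁)
        filter_upwards [E₂] with ω hω
        have hω' : (μ₂[(fun ω₂ => g ((t - k₁) + 1) ω₂ xy.2)|ℱ₂ (t - k₁)]) ω.2
            = g (t - k₁) ω.2 xy.2 := hω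
        rw [← hω', ← congrFun E₁ ω.1]
  refine ⟨Ω₁ × Ω₂, @Prod.instMeasurableSpace Ω₁ Ω₂ m₁ m₂, μ₁.prod μ₂, by infer_instance,
    G, h, ?_, ?_, ?_, hmart, ?_⟩
  · intro t ω xy
    exact mul_nonneg (hf0 _ _ _) (hg0 _ _ _)
  · intro t ω
    rw [Fintype.sum_prod_type]
    simp only [hh, ← Finset.mul_sum, hg1, mul_one, hf1]
  · intro ω
    funext xy
    simp only [hh, Nat.zero_min, Nat.zero_sub, hfi ω.1, hgi ω.2]
  · -- the total variation splits
    have measf : ∀ t, AEStronglyMeasurable (fun ω₁ => ∑ x, |f t ω₁ x - f (t-1) ω₁ x|) μ₁ := by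
      intro t
      refine (Finset.measurable_sum _ fun x _ => ?_).aestronglyMeasurable
      exact ((smf t x).measurable.sub (smf (t-1) x).measurable).abs
    have measg : ∀ t, AEStronglyMeasurable (fun ω₂ => ∑ y, |g t ω₂ y - g (t-1) ω₂ y|) μ₂ := by
      intro t
      refine (Finset.measurable_sum _ fun y _ => ?_).aestronglyMeasurable
      exact ((smg t y).measurable.sub (smg (t-1) y).measurable).abs
    have hterm1 : ∀ t ∈ Finset.Ioc 0 k₁,
        ∫ ω : Ω₁ × Ω₂, ∑ xy : X₁ × X₂, |h t ω xy - h (t-1) ω xy| ∂(μ₁.prod μ₂)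
          = ∫ ω₁, ∑ x, |f t ω₁ x - f (t-1) ω₁ x| ∂μ₁ := by
      intro t ht
      rw [Finset.mem_Ioc] at ht
      have e1 : min t k₁ = t := min_eq_left ht.2
      have e2 : min (t-1) k₁ = t - 1 := min_eq_left (by omega)
      have e3 : t - k₁ = 0 := by omega
      have e4 : t - 1 - k₁ = 0 := by omega
      have hfun : (fun ω : Ω₁ × Ω₂ => ∑ xy : X₁ × X₂, |h t ω xy - h (t-1) ω xy|)
          = fun ω : Ω₁ × Ω₂ => ∑ x, |f t ω.1 x - f (t-1) ω.1 x| := by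
        funext ω
        simp only [hh, e1, e2, e3, e4]
        rw [Fintype.sum_prod_type]
        refine Finset.sum_congr rfl fun x _ => ?_
        have hy : ∀ y : X₂, |f t ω.1 x * g 0 ω.2 y - f (t-1) ω.1 x * g 0 ω.2 y|
            = |f t ω.1 x - f (t-1) ω.1 x| * g 0 ω.2 y := fun y => by
          rw [← sub_mul, abs_mul, abs_of_nonneg (hg0 0 ω.2 y)]
        rw [Finset.sum_congr rfl fun y _ => hy y, ← Finset.mul_sum, hg1 0 ω.2, mul_one]
      rw [hfun]
      exact integral_comp_fst' μ₁ μ₂ (measf t)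
    have hterm2 : ∀ t ∈ Finset.Ioc k₁ (k₁ + k₂),
        ∫ ω : Ω₁ × Ω₂, ∑ xy : X₁ × X₂, |h t ω xy - h (t-1) ω xy| ∂(μ₁.prod μ₂)
          = ∫ ω₂, ∑ y, |g (t - k₁) ω₂ y - g (t - k₁ - 1) ω₂ y| ∂μ₂ := by
      intro t ht
      rw [Finset.mem_Ioc] at ht
      have e1 : min t k₁ = k₁ := min_eq_right (by omega)
      have e2 : min (t-1) k₁ = k₁ := min_eq_right (by omega)
      have e4 : t - 1 - k₁ = t - k₁ - 1 := by omega
      have hfun : (fun ω : Ω₁ × Ω₂ => ∑ xy : X₁ × X₂, |h t ω xy - h (t-1) ω xy|)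
          = fun ω : Ω₁ × Ω₂ => ∑ y, |g (t - k₁) ω.2 y - g (t - k₁ - 1) ω.2 y| := by
        funext ω
        simp only [hh, e1, e2, e4]
        rw [Fintype.sum_prod_type]
        have hx : ∀ x : X₁, ∑ y : X₂, |f k₁ ω.1 x * g (t - k₁) ω.2 y
              - f k₁ ω.1 x * g (t - k₁ - 1) ω.2 y|
            = f k₁ ω.1 x * ∑ y : X₂, |g (t - k₁) ω.2 y - g (t - k₁ - 1) ω.2 y| := fun x => by
          rw [Finset.mul_sum]
          refine Finset.sum_congr rfl fun y _ => ?_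
          rw [← mul_sub, abs_mul, abs_of_nonneg (hf0 k₁ ω.1 x)]
        rw [Finset.sum_congr rfl fun x _ => hx x, ← Finset.sum_mul, hf1 k₁ ω.1, one_mul]
      rw [hfun]
      exact integral_comp_snd' μ₁ μ₂ (measg (t - k₁))
    rw [show Finset.Icc 1 (k₁ + k₂) = Finset.Ioc 0 (k₁ + k₂) from Finset.Icc_add_one_left_eq_Ioc 0 (k₁+k₂),
      ← Finset.sum_Ioc_consecutive _ (Nat.zero_le k₁) (Nat.le_add_right k₁ k₂)]
    congr 1
    · rw [show Finset.Icc 1 k₁ = Finset.Ioc 0 k₁ from Finset.Icc_add_one_left_eq_Ioc 0 k₁]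
      exact Finset.sum_congr rfl fun t ht => (hterm1 t ht).symm
    · rw [show Finset.Icc 1 k₂ = Finset.Ioc 0 k₂ from Finset.Icc_add_one_left_eq_Ioc 0 k₂,
        show Finset.Ioc k₁ (k₁+k₂) = (Finset.Ioc 0 k₂).map (addLeftEmbedding k₁) from by
          rw [Finset.map_add_left_Ioc]; simp,
        Finset.sum_map]
      refine Finset.sum_congr rfl fun s hs => ?_
      rw [Finset.mem_Ioc] at hs
      have hmem : k₁ + s ∈ Finset.Ioc k₁ (k₁ + k₂) := by
        rw [Finset.mem_Ioc]; omega
      have := hterm2 (k₁ + s) hmem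
      have e : k₁ + s - k₁ = s := by omega
      rw [e] at this
      rw [addLeftEmbedding_apply, this]

/-- `V k X p` is the supremum of the expected total `ℓ₁` variation
`E (Σ_{t=1}^k ‖p_t - p_{t-1}‖₁)` over all `k`-step martingales of probability vectors
on the finite set `X` starting at the constant `p`. -/
noncomputable def V (k : ℕ) (X : Type) [Fintype X] (p : X → ℝ) : ℝ :=
  sSup { v | ∃ (Ω : Type) (m : MeasurableSpace Ω) (μ : Measure Ω)
    (_ : IsProbabilityMeasure μ) (ℱ : Filtration ℕ m) (f : ℕ → Ω → X → ℝ),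
    (∀ t ω x, 0 ≤ f t ω x) ∧ (∀ t ω, ∑ x, f t ω x = 1) ∧ (∀ ω, f 0 ω = p) ∧
    (∀ x, Martingale (fun t ω => f t ω x) ℱ μ) ∧
    v = ∑ t ∈ Finset.Icc 1 k, ∫ ω, ∑ x, |f t ω x - f (t - 1) ω x| ∂μ }

/-- `Vd k d` is the supremum of `V k X p` over all finite sets `X` with `d` elements
and all probability vectors `p` on `X`. -/
noncomputable def Vd (k d : ℕ) : ℝ :=
  sSup { v | ∃ (X : Type) (_ : Fintype X), Fintype.card X = d ∧
    ∃ p : X → ℝ, (∀ x, 0 ≤ p x) ∧ (∑ x, p x = 1) ∧ v = V k X p }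

lemma V_eq_sSup_MSet (k : ℕ) (X : Type) [Fintype X] (p : X → ℝ) :
    V k X p = sSup (MSet k X p) := rfl

lemma csSup_add_csSup_le {S₁ S₂ : Set ℝ} {C : ℝ} (h₁ : S₁.Nonempty) (h₂ : S₂.Nonempty)
    (h : ∀ a ∈ S₁, ∀ b ∈ S₂, a + b ≤ C) : sSup S₁ + sSup S₂ ≤ C := by
  have key : sSup S₁ ≤ C - sSup S₂ := by
    refine csSup_le h₁ fun a ha => ?_
    have : sSup S₂ ≤ C - a := csSup_le h₂ fun b hb => by have := h a ha b hb; linarith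
    linarith
  linarith

lemma V_le (k : ℕ) (X : Type) [Fintype X] (p : X → ℝ)
    (hp0 : ∀ x, 0 ≤ p x) (hp1 : ∑ x, p x = 1) : V k X p ≤ 2 * k :=
  csSup_le ⟨0, zero_mem_MSet k X p hp0 hp1⟩ fun _ hv => MSet_le k X p hv

def VdSet (k d : ℕ) : Set ℝ :=
  { v | ∃ (X : Type) (_ : Fintype X), Fintype.card X = d ∧
    ∃ p : X → ℝ, (∀ x, 0 ≤ p x) ∧ (∑ x, p x = 1) ∧ v = V k X p }

lemma VdSet_nonempty (k d : ℕ) (hd : 0 < d) : (VdSet k d).Nonempty := by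
  refine ⟨V k (Fin d) (fun _ => (d : ℝ)⁻¹), Fin d, inferInstance, Fintype.card_fin d,
    fun _ => (d : ℝ)⁻¹, fun _ => by positivity, ?_, rfl⟩
  rw [Finset.sum_const, Finset.card_univ, Fintype.card_fin, nsmul_eq_mul]
  field_simp


/-- Superadditivity of the maximal variation: `V(k₁,d₁) + V(k₂,d₂) ≤ V(k₁+k₂, d₁ d₂)`. -/
theorem stmt15 (k₁ k₂ d₁ d₂ : ℕ) (hk₁ : 0 < k₁) (hk₂ : 0 < k₂)
    (hd₁ : 0 < d₁) (hd₂ : 0 < d₂) :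
    Vd k₁ d₁ + Vd k₂ d₂ ≤ Vd (k₁ + k₂) (d₁ * d₂) := by
  have hVd : ∀ k d, Vd k d = sSup (VdSet k d) := fun _ _ => rfl
  rw [hVd, hVd, hVd]
  refine csSup_add_csSup_le (VdSet_nonempty k₁ d₁ hd₁) (VdSet_nonempty k₂ d₂ hd₂) ?_
  rintro a ⟨X₁, i₁, hc₁, p, hp0, hp1, rfl⟩ b ⟨X₂, i₂, hc₂, q, hq0, hq1, rfl⟩
  have hpq0 : ∀ xy : X₁ × X₂, 0 ≤ p xy.1 * q xy.2 :=
    fun xy => mul_nonneg (hp0 _) (hq0 _)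
  have hpq1 : ∑ xy : X₁ × X₂, p xy.1 * q xy.2 = 1 := by
    rw [Fintype.sum_prod_type]
    simp only [← Finset.mul_sum, hq1, mul_one, hp1]
  have hVbdd : BddAbove (VdSet (k₁ + k₂) (d₁ * d₂)) := by
    refine ⟨2 * (k₁ + k₂), ?_⟩
    rintro v ⟨X, iX, hcX, r, hr0, hr1, rfl⟩
    exact_mod_cast V_le (k₁ + k₂) X r hr0 hr1
  have hmem : V (k₁ + k₂) (X₁ × X₂) (fun xy => p xy.1 * q xy.2)
      ∈ VdSet (k₁ + k₂) (d₁ * d₂) :=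
    ⟨X₁ × X₂, inferInstance, by rw [Fintype.card_prod, hc₁, hc₂], _, hpq0, hpq1, rfl⟩
  refine le_trans ?_ (le_csSup hVbdd hmem)
  rw [V_eq_sSup_MSet, V_eq_sSup_MSet, V_eq_sSup_MSet]
  refine csSup_add_csSup_le ⟨0, zero_mem_MSet k₁ X₁ p hp0 hp1⟩
    ⟨0, zero_mem_MSet k₂ X₂ q hq0 hq1⟩ ?_
  intro v₁ hv₁ v₂ hv₂
  exact le_csSup (MSet_bddAbove (k₁ + k₂) (X₁ × X₂) _) (prod_mem_MSet hv₁ hv₂)
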